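/- Let A ⊆ D and suppose f(X) is square-integrable. Then E[(f(X) − f(X^{∖A}))²]/2 = E[(f(X) − E[f(X) | σ(X_{D∖A})])²], i.e., the expected halved squared difference between f(X) and f(X^{∖A}) equals the expectation of the conditional variance of f(X) given X_{D∖A}. -/

import Mathlib

open MeasureTheory ProbabilityTheory Filter Topology

section Aux
variable {Ω : Type*} {m m0 : MeasurableSpace Ω} {μ : Measure Ω}

lemma integral_sq_eq_norm_sq [IsProbabilityMeasure μ] (h : Lp ℝ 2 μ) :
    ∫ ω, (h ω) ^ 2 ∂μ = ‖h‖ ^ 2 := by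
  rw [← real_inner_self_eq_norm_sq, L2.inner_def]
  simp_rw [RCLike.inner_apply, conj_trivial, sq]

lemma condexp_ae_eq_condExpL2 (hm : m ≤ m0) [IsProbabilityMeasure μ] {Y : Ω → ℝ}
    (hY : MemLp Y 2 μ) :
    μ[Y|m] =ᵐ[μ] (condExpL2 ℝ ℝ hm (hY.toLp Y) : Lp ℝ 2 μ) := by
  refine (ae_eq_condExp_of_forall_setIntegral_eq hm (hY.integrable one_le_two)
    (fun s _ _ => integrableOn_condExpL2_of_measure_ne_top hm (measure_ne_top μ s) _)
    (fun s hs hμs => ?_) (aestronglyMeasurable_condExpL2 hm _)).symm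
  rw [integral_condExpL2_eq hm _ hs hμs.ne]
  exact setIntegral_congr_ae (hm s hs) ((MemLp.coeFn_toLp hY).mono fun x hx _ => hx)

noncomputable def trunc (n : ℕ) (t : ℝ) : ℝ := max (min t n) (-(n : ℝ))

lemma trunc_meas (n : ℕ) : Measurable (trunc n) :=
  (measurable_id.min measurable_const).max measurable_const

lemma abs_trunc_le_nat (n : ℕ) (t : ℝ) : |trunc n t| ≤ n := by
  rw [abs_le]
  exact ⟨le_max_right _ _, max_le ((min_le_right _ _)) (neg_le_self (by positivity))⟩

lemma abs_trunc_le_abs (n : ℕ) (t : ℝ) : |trunc n t| ≤ |t| := by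
  rw [abs_le]
  constructor
  · refine le_trans (le_min (neg_abs_le t)
      ((neg_nonpos.2 (abs_nonneg t)).trans (Nat.cast_nonneg n))) (le_max_left _ _)
  · exact max_le ((min_le_left _ _).trans (le_abs_self t))
      ((neg_nonpos.2 (Nat.cast_nonneg n)).trans (abs_nonneg t))

lemma tendsto_trunc (t : ℝ) : Tendsto (fun n => trunc n t) atTop (𝓝 t) := by
  refine tendsto_atTop_of_eventually_const (i₀ := ⌈|t|⌉₊) fun n hn => ?_
  have h1 : |t| ≤ n := le_trans (Nat.le_ceil _) (Nat.cast_le.2 hn)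
  unfold trunc
  rw [min_eq_left (le_trans (le_abs_self t) h1),
    max_eq_left (le_trans (neg_le_neg h1) (neg_abs_le t))]

end Aux

/-- The σ-algebra `σ(X_{D∖A})` generated by the subvector of `X` indexed by `D ∖ A`. -/
def sigmaRestrict {Ω : Type*} {d : ℕ} (X : Ω → Fin d → ℝ) (A : Finset (Fin d)) :
    MeasurableSpace Ω :=
  MeasurableSpace.comap (fun ω => (fun i : {i : Fin d // i ∈ Aᶜ} => X ω i)) inferInstance

theorem stmt3
    {Ω : Type*} [MeasurableSpace Ω] (μ : Measure Ω) [IsProbabilityMeasure μ]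
    {d : ℕ} (X : Ω → Fin d → ℝ) (hX : Measurable X)
    (f : (Fin d → ℝ) → ℝ) (hf : Measurable f)
    (A : Finset (Fin d)) (X' : Ω → (Fin d → ℝ)) (hX' : Measurable X')
    -- (a) `X` and `X'` are conditionally i.i.d. given `σ(X_{D∖A})`
    (hiid : ∀ (φ φ' : (Fin d → ℝ) → ℝ),
      Measurable φ → Measurable φ' →
      (∃ C, ∀ x, |φ x| ≤ C) → (∃ C, ∀ x, |φ' x| ≤ C) →
      μ[(fun ω => φ (X ω) * φ' (X' ω)) | sigmaRestrict X A]
        =ᵐ[μ] fun ω => (μ[(fun ω => φ (X ω)) | sigmaRestrict X A]) ω *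
                        (μ[(fun ω => φ' (X ω)) | sigmaRestrict X A]) ω)
    -- (b) `X'` agrees with `X` on the coordinates outside `A`, almost surely
    (hfix : ∀ᵐ ω ∂μ, ∀ i ∉ A, X' ω i = X ω i)
    -- square-integrability of `f(X)`
    (hfL2 : MemLp (fun ω => f (X ω)) 2 μ) :
    (∫ ω, (f (X ω) - f (X' ω)) ^ 2 ∂μ) / 2
      = ∫ ω, (f (X ω) - (μ[(fun ω => f (X ω)) | sigmaRestrict X A]) ω) ^ 2 ∂μ := by
  have hm : sigmaRestrict X A ≤ ‹MeasurableSpace Ω› :=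
    Measurable.comap_le (measurable_pi_lambda _ fun i => (measurable_pi_apply (i : Fin d)).comp hX)
  -- 1. the law of `X'` equals the law of `X`
  have hbound_int : ∀ {φ : (Fin d → ℝ) → ℝ}, Measurable φ → ∀ (C : ℝ), (∀ x, |φ x| ≤ C) →
      ∀ {Z : Ω → Fin d → ℝ}, Measurable Z → Integrable (fun ω => φ (Z ω)) μ := by
    intro φ hφ C hC Z hZ
    exact ⟨(hφ.comp hZ).aestronglyMeasurable,
      HasFiniteIntegral.of_bounded (C := C)
        (ae_of_all μ fun ω => by simpa [Real.norm_eq_abs] using hC (Z ω))⟩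
  have hmap : μ.map X' = μ.map X := by
    refine Measure.ext fun s hs => ?_
    set φ' : (Fin d → ℝ) → ℝ := s.indicator fun _ => 1 with hφ'
    have hφ'm : Measurable φ' := measurable_const.indicator hs
    have hφ'b : ∀ x, |φ' x| ≤ 1 := by
      intro x; by_cases hx : x ∈ s <;> simp [hφ', Set.indicator, hx]
    have h1 := hiid (fun _ => 1) φ' measurable_const hφ'm
      ⟨1, fun x => by norm_num⟩ ⟨1, hφ'b⟩
    have e1 : ∫ ω, φ' (X' ω) ∂μ = ∫ ω, φ' (X ω) ∂μ := by
      calc ∫ ω, φ' (X' ω) ∂μ = ∫ ω, (1 : ℝ) * φ' (X' ω) ∂μ := by simp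
        _ = ∫ ω, (μ[(fun ω => (1:ℝ) * φ' (X' ω)) | sigmaRestrict X A]) ω ∂μ :=
            (integral_condExp hm).symm
        _ = ∫ ω, ((μ[(fun _ => (1:ℝ)) | sigmaRestrict X A]) ω *
              (μ[(fun ω => φ' (X ω)) | sigmaRestrict X A]) ω) ∂μ := integral_congr_ae h1
        _ = ∫ ω, (μ[(fun ω => φ' (X ω)) | sigmaRestrict X A]) ω ∂μ := by
            simp [condExp_const hm]
        _ = ∫ ω, φ' (X ω) ∂μ := integral_condExp hm
    have l : ∀ {Z : Ω → Fin d → ℝ}, Measurable Z →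
        ∫ ω, φ' (Z ω) ∂μ = (μ (Z ⁻¹' s)).toReal := by
      intro Z hZ
      have : (fun ω => φ' (Z ω)) = (Z ⁻¹' s).indicator (fun _ => (1:ℝ)) := by
        funext ω; by_cases h : Z ω ∈ s <;> simp [hφ', Set.indicator, h]
      rw [this, integral_indicator_const _ (hZ hs)]; simp [Measure.real]
    rw [Measure.map_apply hX' hs, Measure.map_apply hX hs]
    rw [l hX', l hX] at e1
    exact (ENNReal.toReal_eq_toReal_iff' (measure_ne_top _ _) (measure_ne_top _ _)).1 e1
  have hY'L2 : MemLp (fun ω => f (X' ω)) 2 μ := by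
    have h1 : MemLp f 2 (μ.map X) :=
      (memLp_map_measure_iff hf.aestronglyMeasurable hX.aemeasurable).2 hfL2
    rw [← hmap] at h1
    exact (memLp_map_measure_iff hf.aestronglyMeasurable hX'.aemeasurable).1 h1
  have hY'sq : ∫ ω, (f (X' ω)) ^ 2 ∂μ = ∫ ω, (f (X ω)) ^ 2 ∂μ := by
    have hg2 : AEStronglyMeasurable (fun y => (f y) ^ 2) (μ.map X) :=
      (hf.pow_const 2).aestronglyMeasurable
    have hg2' : AEStronglyMeasurable (fun y => (f y) ^ 2) (μ.map X') := by rw [hmap]; exact hg2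
    calc ∫ ω, (f (X' ω)) ^ 2 ∂μ = ∫ y, (f y) ^ 2 ∂(μ.map X') :=
          (integral_map hX'.aemeasurable hg2').symm
      _ = ∫ y, (f y) ^ 2 ∂(μ.map X) := by rw [hmap]
      _ = ∫ ω, (f (X ω)) ^ 2 ∂μ := integral_map hX.aemeasurable hg2
  -- 2. Lp setup
  set g : Lp ℝ 2 μ := hfL2.toLp _ with hg_def
  set g' : Lp ℝ 2 μ := hY'L2.toLp _ with hg'_def
  set Pg : Lp ℝ 2 μ := (condExpL2 ℝ ℝ hm g : Lp ℝ 2 μ) with hPg_def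
  have hZ : μ[(fun ω => f (X ω)) | sigmaRestrict X A] =ᵐ[μ] Pg :=
    condexp_ae_eq_condExpL2 hm hfL2
  have hcg : (g : Ω → ℝ) =ᵐ[μ] fun ω => f (X ω) := hfL2.coeFn_toLp
  have hcg' : (g' : Ω → ℝ) =ᵐ[μ] fun ω => f (X' ω) := hY'L2.coeFn_toLp
  -- truncations
  have hgnL2 : ∀ n : ℕ, MemLp (fun ω => trunc n (f (X ω))) 2 μ := fun n =>
    MemLp.of_bound ((trunc_meas n).comp (hf.comp hX)).aestronglyMeasurable n
      (ae_of_all _ fun ω => by simpa [Real.norm_eq_abs] using abs_trunc_le_nat n (f (X ω)))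
  set gn : ℕ → Lp ℝ 2 μ := fun n => (hgnL2 n).toLp _ with hgn_def
  have hcgn : ∀ n : ℕ, ((gn n : Ω → ℝ)) =ᵐ[μ] fun ω => trunc n (f (X ω)) :=
    fun n => (hgnL2 n).coeFn_toLp
  -- per-n identity
  have key : ∀ n : ℕ, ∫ ω, trunc n (f (X ω)) * trunc n (f (X' ω)) ∂μ
      = ‖(condExpL2 ℝ ℝ hm (gn n) : Lp ℝ 2 μ)‖ ^ 2 := by
    intro n
    have hiidn := hiid (fun x => trunc n (f x)) (fun x => trunc n (f x))
      ((trunc_meas n).comp hf) ((trunc_meas n).comp hf)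
      ⟨n, fun x => abs_trunc_le_nat n _⟩ ⟨n, fun x => abs_trunc_le_nat n _⟩
    have hZn : μ[(fun ω => trunc n (f (X ω))) | sigmaRestrict X A]
        =ᵐ[μ] (condExpL2 ℝ ℝ hm (gn n) : Lp ℝ 2 μ) := condexp_ae_eq_condExpL2 hm (hgnL2 n)
    calc ∫ ω, trunc n (f (X ω)) * trunc n (f (X' ω)) ∂μ
        = ∫ ω, (μ[(fun ω => trunc n (f (X ω)) * trunc n (f (X' ω))) | sigmaRestrict X A]) ω ∂μ :=
          (integral_condExp hm).symm
      _ = ∫ ω, ((μ[(fun ω => trunc n (f (X ω))) | sigmaRestrict X A]) ω *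
            (μ[(fun ω => trunc n (f (X ω))) | sigmaRestrict X A]) ω) ∂μ := integral_congr_ae hiidn
      _ = ∫ ω, ((condExpL2 ℝ ℝ hm (gn n) : Lp ℝ 2 μ) ω) ^ 2 ∂μ := by
          refine integral_congr_ae ?_
          filter_upwards [hZn] with ω h
          rw [h, sq]
      _ = ‖(condExpL2 ℝ ℝ hm (gn n) : Lp ℝ 2 μ)‖ ^ 2 := integral_sq_eq_norm_sq _
  -- integrability of the product f(X) * f(X')
  have hYY' : Integrable (fun ω => f (X ω) * f (X' ω)) μ := by
    have h1 := L2.integrable_inner (𝕜 := ℝ) g g'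
    have h2 : (fun ω => (inner ℝ ((g : Ω → ℝ) ω) ((g' : Ω → ℝ) ω) : ℝ))
        =ᵐ[μ] fun ω => f (X ω) * f (X' ω) := by
      filter_upwards [hcg, hcg'] with ω h h'
      simp [h, h', RCLike.inner_apply, mul_comm]
    exact (integrable_congr h2).1 h1
  -- LHS limit
  have hL : Tendsto (fun n => ∫ ω, trunc n (f (X ω)) * trunc n (f (X' ω)) ∂μ) atTop
      (𝓝 (∫ ω, f (X ω) * f (X' ω) ∂μ)) := by
    refine tendsto_integral_of_dominated_convergence (fun ω => |f (X ω)| * |f (X' ω)|)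
      (fun n => (((trunc_meas n).comp (hf.comp hX)).mul
        ((trunc_meas n).comp (hf.comp hX'))).aestronglyMeasurable)
      (by simpa [abs_mul] using hYY'.abs)
      (fun n => ae_of_all μ fun ω => ?_) (ae_of_all μ fun ω => ?_)
    · rw [Real.norm_eq_abs, abs_mul]
      exact mul_le_mul (abs_trunc_le_abs n _) (abs_trunc_le_abs n _) (abs_nonneg _) (abs_nonneg _)
    · exact (tendsto_trunc _).mul (tendsto_trunc _)
  -- gn → g in L²
  have hgn_tendsto : Tendsto gn atTop (𝓝 g) := by
    rw [tendsto_iff_norm_sub_tendsto_zero]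
    have hsq : ∀ n : ℕ, ‖gn n - g‖ ^ 2 = ∫ ω, (trunc n (f (X ω)) - f (X ω)) ^ 2 ∂μ := by
      intro n
      rw [← integral_sq_eq_norm_sq (gn n - g)]
      refine integral_congr_ae ?_
      filter_upwards [Lp.coeFn_sub (gn n) g, hcgn n, hcg] with ω h1 h2 h3
      rw [h1, Pi.sub_apply, h2, h3]
    have hT : Tendsto (fun n => ∫ ω, (trunc n (f (X ω)) - f (X ω)) ^ 2 ∂μ) atTop (𝓝 0) := by
      have h0 : (0 : ℝ) = ∫ ω, (0 : ℝ) ∂μ := by simp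
      rw [h0]
      refine tendsto_integral_of_dominated_convergence (fun ω => (2 * |f (X ω)|) ^ 2)
        (fun n => ((((trunc_meas n).comp (hf.comp hX)).sub
          (hf.comp hX)).pow_const 2).aestronglyMeasurable)
        (by simpa [mul_pow, sq_abs, show (2:ℝ) ^ 2 = 4 from by norm_num]
          using hfL2.integrable_sq.const_mul 4)
        (fun n => ae_of_all μ fun ω => ?_) (ae_of_all μ fun ω => ?_)
      · rw [Real.norm_eq_abs, abs_pow]
        refine pow_le_pow_left₀ (abs_nonneg _) ?_ 2
        calc |trunc n (f (X ω)) - f (X ω)| ≤ |trunc n (f (X ω))| + |f (X ω)| := abs_sub _ _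
          _ ≤ 2 * |f (X ω)| := by
              have := abs_trunc_le_abs n (f (X ω)); linarith
      · have h := ((tendsto_trunc (f (X ω))).sub
          (tendsto_const_nhds (x := f (X ω)))).pow 2
        simpa using h
    have heq : (fun n => ‖gn n - g‖) = fun n =>
        Real.sqrt (∫ ω, (trunc n (f (X ω)) - f (X ω)) ^ 2 ∂μ) := by
      funext n; rw [← hsq n, Real.sqrt_sq (norm_nonneg _)]
    rw [heq]
    have := (Real.continuous_sqrt.tendsto 0).comp hT
    simpa [Function.comp_def] using this
  -- ‖P gn‖² → ‖P g‖²
  have hR : Tendsto (fun n => ‖(condExpL2 ℝ ℝ hm (gn n) : Lp ℝ 2 μ)‖ ^ 2) atTop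
      (𝓝 (‖Pg‖ ^ 2)) := by
    have hc : Continuous fun u : Lp ℝ 2 μ => ‖(condExpL2 ℝ ℝ hm u : Lp ℝ 2 μ)‖ ^ 2 :=
      (continuous_norm.comp (continuous_subtype_val.comp (condExpL2 ℝ ℝ hm).continuous)).pow 2
    exact (hc.tendsto g).comp hgn_tendsto
  -- conclusion of the hard part
  have hI : ∫ ω, f (X ω) * f (X' ω) ∂μ = ‖Pg‖ ^ 2 := by
    have hL' : Tendsto (fun n => ‖(condExpL2 ℝ ℝ hm (gn n) : Lp ℝ 2 μ)‖ ^ 2) atTop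
        (𝓝 (∫ ω, f (X ω) * f (X' ω) ∂μ)) := by
      refine hL.congr fun n => key n
    exact tendsto_nhds_unique hL' hR
  -- integral identities
  have hIY : ∫ ω, (f (X ω)) ^ 2 ∂μ = ‖g‖ ^ 2 := by
    rw [← integral_sq_eq_norm_sq g]
    refine integral_congr_ae ?_
    filter_upwards [hcg] with ω h
    rw [h]
  have hproj : (inner ℝ g Pg : ℝ) = ‖Pg‖ ^ 2 := by
    rw [← real_inner_self_eq_norm_sq]
    exact (inner_condExpL2_eq_inner_fun hm g Pg (aestronglyMeasurable_condExpL2 hm g)).symm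
  have hRHS : ∫ ω, (f (X ω) - (μ[(fun ω => f (X ω)) | sigmaRestrict X A]) ω) ^ 2 ∂μ
      = ‖g - Pg‖ ^ 2 := by
    rw [← integral_sq_eq_norm_sq (g - Pg)]
    refine integral_congr_ae ?_
    filter_upwards [hcg, hZ, Lp.coeFn_sub g Pg] with ω h1 h2 h3
    rw [h3, Pi.sub_apply, h1, h2]
  have hLHS : ∫ ω, (f (X ω) - f (X' ω)) ^ 2 ∂μ
      = ∫ ω, (f (X ω)) ^ 2 ∂μ - 2 * ∫ ω, f (X ω) * f (X' ω) ∂μ + ∫ ω, (f (X' ω)) ^ 2 ∂μ := by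
    have e : (fun ω => (f (X ω) - f (X' ω)) ^ 2)
        = fun ω => ((f (X ω)) ^ 2 - 2 * (f (X ω) * f (X' ω))) + (f (X' ω)) ^ 2 := by
      funext ω; ring
    have i2 : Integrable (fun ω => 2 * (f (X ω) * f (X' ω))) μ := hYY'.const_mul 2
    have i1 : Integrable (fun ω => (f (X ω)) ^ 2 - 2 * (f (X ω) * f (X' ω))) μ :=
      hfL2.integrable_sq.sub i2
    rw [e, integral_add i1 hY'L2.integrable_sq, integral_sub hfL2.integrable_sq i2,
      integral_const_mul 2 _]
  have hns : ‖g - Pg‖ ^ 2 = ‖g‖ ^ 2 - 2 * (inner ℝ g Pg : ℝ) + ‖Pg‖ ^ 2 := norm_sub_sq_real g Pg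
  rw [hRHS, hLHS, hns, hproj, hIY, hY'sq, hIY, hI]
  ring
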